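/- arXiv:1602.05799 — 3 statements merged into one kernel-verified Lean document; each statement's English description precedes it below -/
import Mathlib

section
/- Let G be a group and let L = ⊕_{g∈G} L_g be a G-graded Lie algebra over a field F. If the left-normed product [L_{g_1}, L_{g_2}, ..., L_{g_m}] is nonzero for some g_1, ..., g_m ∈ G (i.e., there exist x_i ∈ L_{g_i} with [x_1, x_2, ..., x_m] ≠ 0 in the left-normed convention), then the elements g_1, ..., g_m pairwise commute in G. -/
/-- A `G`-grading on a Lie algebra `L` over `F`: a vector space direct sum decomposition
`L = ⊕_{g ∈ G} 𝒜 g` such that `⁅𝒜 g, 𝒜 h⁆ ⊆ 𝒜 (g * h)` for all `g h : G`. -/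
def IsLieGrading {G F L : Type*} [Group G] [Field F] [LieRing L] [LieAlgebra F L]
    (𝒜 : G → Submodule F L) : Prop :=
  letI : DecidableEq G := Classical.decEq G
  DirectSum.IsInternal 𝒜 ∧
    ∀ g h : G, ∀ x ∈ 𝒜 g, ∀ y ∈ 𝒜 h, ⁅x, y⁆ ∈ 𝒜 (g * h)

/-- A subspace `V` of a `G`-graded Lie algebra is graded (homogeneous) if it is the
sum of its homogeneous components, i.e. `V = ⊕_{g ∈ G} (V ∩ L_g)`. -/
def IsGradedSubspace {G F L : Type*} [Group G] [Field F] [LieRing L] [LieAlgebra F L]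
    (𝒜 : G → Submodule F L) (V : Submodule F L) : Prop :=
  V = ⨆ g : G, 𝒜 g ⊓ V

/-- A `G`-graded Lie algebra is graded simple if `⁅L, L⁆ ≠ 0` and the only graded
ideals of `L` are `0` and `L`. -/
def IsGradedSimple {G F L : Type*} [Group G] [Field F] [LieRing L] [LieAlgebra F L]
    (𝒜 : G → Submodule F L) : Prop :=
  (∃ x y : L, ⁅x, y⁆ ≠ 0) ∧
    ∀ I : LieIdeal F L, IsGradedSubspace 𝒜 I.toSubmodule → I = ⊥ ∨ I = ⊤

/-- The left-normed Lie product `[a, b₁, b₂, …, bₙ] = [[…[[a, b₁], b₂]…], bₙ]`. -/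
def leftNormedBracket {L : Type*} [LieRing L] : L → List L → L
  | a, [] => a
  | a, b :: t => leftNormedBracket ⁅a, b⁆ t

private theorem lnb_append {L : Type*} [LieRing L] (a : L) (t s : List L) :
    leftNormedBracket a (t ++ s) = leftNormedBracket (leftNormedBracket a t) s := by
  induction t generalizing a with
  | nil => rfl
  | cons b t ih => simp [leftNormedBracket, ih]

private theorem lnb_mem {G F L : Type*} [Group G] [Field F] [LieRing L] [LieAlgebra F L]
    (𝒜 : G → Submodule F L)
    (hbr : ∀ g h : G, ∀ x ∈ 𝒜 g, ∀ y ∈ 𝒜 h, ⁅x, y⁆ ∈ 𝒜 (g * h)) :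
    ∀ (l : List (G × L)) (g₀ : G) (a : L), a ∈ 𝒜 g₀ → (∀ p ∈ l, p.2 ∈ 𝒜 p.1) →
      leftNormedBracket a (l.map Prod.snd) ∈ 𝒜 (g₀ * (l.map Prod.fst).prod) := by
  intro l
  induction l with
  | nil => intro g₀ a ha _; simpa [leftNormedBracket] using ha
  | cons p t ih =>
    intro g₀ a ha hl
    have h1 : ⁅a, p.2⁆ ∈ 𝒜 (g₀ * p.1) := hbr _ _ _ ha _ (hl p (by simp))
    have := ih (g₀ * p.1) ⁅a, p.2⁆ h1 (fun q hq => hl q (by simp [hq]))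
    simpa [leftNormedBracket, mul_assoc] using this

private theorem base2 {G F L : Type*} [Group G] [Field F] [LieRing L] [LieAlgebra F L]
    (𝒜 : G → Submodule F L)
    (hdisj : ∀ p q : G, p ≠ q → ∀ a : L, a ∈ 𝒜 p → a ∈ 𝒜 q → a = 0)
    (hbr : ∀ g h : G, ∀ x ∈ 𝒜 g, ∀ y ∈ 𝒜 h, ⁅x, y⁆ ∈ 𝒜 (g * h))
    (g h : G) (x y : L) (hx : x ∈ 𝒜 g) (hy : y ∈ 𝒜 h) (hne : ⁅x, y⁆ ≠ 0) :
    Commute g h := by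
  by_contra hc
  have h1 : ⁅x, y⁆ ∈ 𝒜 (g * h) := hbr _ _ _ hx _ hy
  have h2 : ⁅x, y⁆ ∈ 𝒜 (h * g) := by
    have := (𝒜 (h * g)).neg_mem (hbr _ _ _ hy _ hx)
    rwa [lie_skew] at this
  exact hne (hdisj _ _ hc _ h1 h2)

private theorem lnb_commute {G F L : Type*} [Group G] [Field F] [LieRing L] [LieAlgebra F L]
    (𝒜 : G → Submodule F L)
    (hdisj : ∀ p q : G, p ≠ q → ∀ a : L, a ∈ 𝒜 p → a ∈ 𝒜 q → a = 0)
    (hbr : ∀ g h : G, ∀ x ∈ 𝒜 g, ∀ y ∈ 𝒜 h, ⁅x, y⁆ ∈ 𝒜 (g * h)) :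
    ∀ (n : ℕ) (l : List (G × L)) (g₀ : G) (a : L), l.length = n → a ∈ 𝒜 g₀ →
      (∀ p ∈ l, p.2 ∈ 𝒜 p.1) → leftNormedBracket a (l.map Prod.snd) ≠ 0 →
      ∀ s ∈ g₀ :: l.map Prod.fst, ∀ t ∈ g₀ :: l.map Prod.fst, Commute s t := by
  intro n
  induction n using Nat.strong_induction_on with
  | _ n ih =>
  intro l g₀ a hlen ha hl hne s hs t ht
  rcases l.eq_nil_or_concat' with rfl | ⟨l', qv, rfl⟩
  · simp at hs ht; subst hs; subst ht; exact Commute.refl _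
  rcases l'.eq_nil_or_concat' with rfl | ⟨l'', pu, rfl⟩
  · -- l = [qv]
    have hb : Commute g₀ qv.1 := by
      refine base2 𝒜 hdisj hbr g₀ qv.1 a qv.2 ha (hl qv (by simp)) ?_
      simpa [leftNormedBracket] using hne
    simp at hs ht
    rcases hs with rfl | rfl <;> rcases ht with rfl | rfl
    · exact Commute.refl _
    · exact hb
    · exact hb.symm
    · exact Commute.refl _
  · -- l = l'' ++ [pu, qv]
    set b' : L := leftNormedBracket a (l''.map Prod.snd) with hb'
    have hl'' : ∀ p ∈ l'', p.2 ∈ 𝒜 p.1 := fun p hp => hl p (by simp [hp])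
    have hpu : pu.2 ∈ 𝒜 pu.1 := hl pu (by simp)
    have hqv : qv.2 ∈ 𝒜 qv.1 := hl qv (by simp)
    have hfull : leftNormedBracket a (((l'' ++ [pu]) ++ [qv]).map Prod.snd)
        = ⁅⁅b', pu.2⁆, qv.2⁆ := by
      simp only [List.map_append, lnb_append, hb']
      rfl
    rw [hfull] at hne
    have hpre : ⁅b', pu.2⁆ ≠ 0 := by
      intro h; rw [h] at hne; simp at hne
    have hlt1 : l''.length + 1 < n := by
      subst hlen; simp
    -- H1 : all pairs among g₀ :: fst l'' ++ [pu.1] commute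
    have H1 := ih (l''.length + 1) hlt1 (l'' ++ [pu]) g₀ a (by simp) ha
      (fun p hp => hl p (by simp at hp ⊢; tauto))
      (by simp only [List.map_append, lnb_append, ← hb']; simpa [leftNormedBracket])
    simp only [List.map_append, List.map_cons, List.map_nil] at H1
    -- H2 : (g₀ * (P * pu.1)) commutes with qv.1
    set P : G := (l''.map Prod.fst).prod with hP
    have hb'' : ⁅b', pu.2⁆ ∈ 𝒜 (g₀ * (P * pu.1)) := by
      have := lnb_mem 𝒜 hbr (l'' ++ [pu]) g₀ a ha
        (fun p hp => hl p (by simp at hp ⊢; tauto))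
      · simp only [List.map_append, lnb_append, List.prod_append, ← hb', ← hP] at this
        simpa [leftNormedBracket] using this
    have H2 : Commute (g₀ * (P * pu.1)) qv.1 :=
      base2 𝒜 hdisj hbr _ _ _ _ hb'' hqv hne
    -- Jacobi
    have hjac : ⁅⁅b', pu.2⁆, qv.2⁆ = ⁅⁅b', qv.2⁆, pu.2⁆ + ⁅b', ⁅pu.2, qv.2⁆⁆ := by
      rw [lie_lie, ← lie_skew ⁅b', qv.2⁆ pu.2]
      abel
    -- the two key commutation facts we extract in both cases:
    have key : (∀ e ∈ g₀ :: l''.map Prod.fst, Commute e qv.1) ∧ Commute pu.1 qv.1 := by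
      by_cases hd : ⁅b', ⁅pu.2, qv.2⁆⁆ = 0
      · -- then c ≠ 0
        have hc : ⁅⁅b', qv.2⁆, pu.2⁆ ≠ 0 := by
          intro h; rw [hjac, h, hd] at hne; simp at hne
        have hpre' : ⁅b', qv.2⁆ ≠ 0 := by
          intro h; rw [h] at hc; simp at hc
        have H3 := ih (l''.length + 1) hlt1 (l'' ++ [qv]) g₀ a (by simp) ha
          (fun p hp => by simp at hp; rcases hp with hp | rfl; exacts [hl'' p hp, hqv])
          (by simp only [List.map_append, lnb_append, ← hb']; simpa [leftNormedBracket])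
        simp only [List.map_append, List.map_cons, List.map_nil] at H3
        have he : ∀ e ∈ g₀ :: l''.map Prod.fst, Commute e qv.1 := by
          intro e he
          exact H3 e (by simp at he ⊢; tauto) qv.1 (by simp)
        refine ⟨he, ?_⟩
        have hPq : Commute P qv.1 := Commute.list_prod_left _ _
          (fun e hee => he e (by simp [hee]))
        have hgPq : Commute (g₀ * P) qv.1 :=
          (he g₀ (by simp)).mul_left hPq
        have H2' : Commute ((g₀ * P) * pu.1) qv.1 := by rwa [← mul_assoc] at H2
        have := hgPq.inv_left.mul_left H2'
        rwa [inv_mul_cancel_left] at this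
      · -- d ≠ 0 case
        have hz : ⁅pu.2, qv.2⁆ ≠ 0 := by
          intro h; rw [h] at hd; simp at hd
        have hpq : Commute pu.1 qv.1 := base2 𝒜 hdisj hbr _ _ _ _ hpu hqv hz
        refine ⟨?_, hpq⟩
        have H4 := ih (l''.length + 1) hlt1 (l'' ++ [(pu.1 * qv.1, ⁅pu.2, qv.2⁆)]) g₀ a
          (by simp) ha
          (fun p hp => by
            simp at hp; rcases hp with hp | rfl
            exacts [hl'' p hp, hbr _ _ _ hpu _ hqv])
          (by simp only [List.map_append, lnb_append, ← hb']; simpa [leftNormedBracket])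
        simp only [List.map_append, List.map_cons, List.map_nil] at H4
        intro e hee
        have h1 : Commute e (pu.1 * qv.1) :=
          H4 e (by simp at hee ⊢; tauto) (pu.1 * qv.1) (by simp)
        have h2 : Commute e pu.1 :=
          H1 e (by simp at hee ⊢; tauto) pu.1 (by simp)
        have := h2.inv_right.mul_right h1
        rwa [inv_mul_cancel_left] at this
    -- now assemble: all pairs in g₀ :: fst l'' ++ [pu.1, qv.1]
    obtain ⟨hq, hpq⟩ := key
    have hmem : ∀ u, u ∈ g₀ :: ((l'' ++ [pu]) ++ [qv]).map Prod.fst →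
        u ∈ g₀ :: l''.map Prod.fst ++ [pu.1] ∨ u = qv.1 := by
      intro u hu
      simp at hu ⊢; tauto
    have hcom : ∀ u, u ∈ g₀ :: l''.map Prod.fst ++ [pu.1] → Commute u qv.1 := by
      intro u hu
      simp at hu
      rcases hu with rfl | hu | rfl
      · exact hq _ (by simp)
      · exact hq u (by simp [hu])
      · exact hpq
    rcases hmem s hs with hs' | rfl <;> rcases hmem t ht with ht' | rfl
    · exact H1 s hs' t ht'
    · exact hcom s hs'
    · exact (hcom t ht').symm
    · exact Commute.refl _

/-- If the left-normed product `[L_{g₁}, …, L_{gₘ}]` is nonzero, i.e. there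
are homogeneous `xᵢ ∈ L_{gᵢ}` with `[x₁, …, xₘ] ≠ 0`, then `g₁, …, gₘ` pairwise commute. -/
theorem leftNormed_ne_zero_pairwise_commute {G F L : Type*} [Group G] [Field F]
    [LieRing L] [LieAlgebra F L] (𝒜 : G → Submodule F L) (hgr : IsLieGrading 𝒜)
    (m : ℕ) (g : Fin (m + 1) → G) (x : Fin (m + 1) → L)
    (hx : ∀ i, x i ∈ 𝒜 (g i))
    (hne : leftNormedBracket (x 0) (List.ofFn fun i : Fin m => x i.succ) ≠ 0) :
    ∀ i j, g i * g j = g j * g i := by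
  letI : DecidableEq G := Classical.decEq G
  obtain ⟨hint, hbr⟩ := hgr
  have hdisj : ∀ p q : G, p ≠ q → ∀ a : L, a ∈ 𝒜 p → a ∈ 𝒜 q → a = 0 := by
    intro p q hpq a hap haq
    exact Submodule.disjoint_def.mp (hint.submodule_iSupIndep.pairwiseDisjoint hpq) a hap haq
  set l : List (G × L) := List.ofFn (fun i : Fin m => (g i.succ, x i.succ)) with hldef
  have hmapsnd : l.map Prod.snd = List.ofFn (fun i : Fin m => x i.succ) := by
    simp only [hldef, List.map_ofFn]
    rfl
  have hmem : ∀ i : Fin (m + 1), g i ∈ (g 0) :: l.map Prod.fst := by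
    intro i
    induction i using Fin.cases with
    | zero => simp
    | succ k =>
      simp only [hldef, List.map_ofFn, List.mem_cons, List.mem_ofFn, Function.comp]
      exact Or.inr ⟨k, rfl⟩
  have key := lnb_commute 𝒜 hdisj hbr l.length l (g 0) (x 0) rfl (hx 0)
    (by
      intro p hp
      simp only [hldef, List.mem_ofFn] at hp
      obtain ⟨i, rfl⟩ := hp
      exact hx i.succ)
    (by rwa [hmapsnd])
  intro i j
  exact key (g i) (hmem i) (g j) (hmem j)
end

section
/- Let G be a group and let L = ⊕_{g∈G} L_g be a G-graded Lie algebra over a field F. Suppose g, h ∈ Supp L satisfy gh ≠ hg. Then [Id(L_g), Id(L_h)] = 0, where Id(L_g) denotes the (two-sided Lie) ideal of L generated by the subspace L_g; that is, [u, v] = 0 for every u in the ideal generated by L_g and every v in the ideal generated by L_h. -/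
/-- If `g, h ∈ Supp L` do not commute, then the ideals of `L` generated by
`L_g` and by `L_h` commute elementwise: `[Id(L_g), Id(L_h)] = 0`. -/
theorem ideals_commute_of_not_commute {G F L : Type*} [Group G] [Field F]
    [LieRing L] [LieAlgebra F L] (𝒜 : G → Submodule F L) (hgr : IsLieGrading 𝒜)
    {g h : G} (hg : 𝒜 g ≠ ⊥) (hh : 𝒜 h ≠ ⊥) (hnc : g * h ≠ h * g) :
    ∀ u ∈ LieSubmodule.lieSpan F L (𝒜 g : Set L),
      ∀ v ∈ LieSubmodule.lieSpan F L (𝒜 h : Set L), ⁅u, v⁆ = 0 := by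
  classical
  obtain ⟨hint, hmul⟩ := hgr
  -- distinct homogeneous components intersect trivially
  have hdisj : ∀ a b : G, a ≠ b → ∀ x : L, x ∈ 𝒜 a → x ∈ 𝒜 b → x = 0 := by
    intro a b hab x hxa hxb
    have hpd := hint.submodule_iSupIndep.pairwiseDisjoint hab
    exact (Submodule.disjoint_def.mp hpd) x hxa hxb
  -- homogeneous components of non-commuting degrees bracket to zero
  have key0 : ∀ a b : G, a * b ≠ b * a → ∀ x ∈ 𝒜 a, ∀ y ∈ 𝒜 b, ⁅x, y⁆ = 0 := by
    intro a b hab x hx y hy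
    have h1 : ⁅x, y⁆ ∈ 𝒜 (a * b) := hmul a b x hx y hy
    have h2 : ⁅x, y⁆ ∈ 𝒜 (b * a) := by
      have := (𝒜 (b * a)).neg_mem (hmul b a y hy x hx)
      simpa using this
    exact hdisj _ _ hab _ h1 h2
  have htop : (⨆ t, 𝒜 t) = ⊤ := hint.submodule_iSup_eq_top
  -- the set of v killed by every homogeneous c whose degree does not commute with h
  -- is a Lie submodule
  let C : LieSubmodule F L L :=
  { carrier := {v | ∀ k : G, k * h ≠ h * k → ∀ c ∈ 𝒜 k, ⁅c, v⁆ = 0}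
    add_mem' := by
      intro a b ha hb k hk c hc
      rw [lie_add, ha k hk c hc, hb k hk c hc, add_zero]
    zero_mem' := by intro k hk c hc; simp
    smul_mem' := by
      intro r a ha k hk c hc
      rw [lie_smul, ha k hk c hc, smul_zero]
    lie_mem := by
      intro x v hv
      have main : ∀ x : L, x ∈ (⊤ : Submodule F L) →
          ∀ k : G, k * h ≠ h * k → ∀ c ∈ 𝒜 k, ⁅c, ⁅x, v⁆⁆ = 0 := by
        intro x hx
        rw [← htop] at hx
        refine Submodule.iSup_induction 𝒜 (motive := fun x => ∀ k : G, k * h ≠ h * k →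
          ∀ c ∈ 𝒜 k, ⁅c, ⁅x, v⁆⁆ = 0) hx ?_ (by simp) ?_
        · intro t x hxt k hk c hc
          by_cases hcom : k * t * h = h * (k * t)
          · -- then t and h cannot commute, so ⁅x, v⁆ = 0
            have hth : t * h ≠ h * t := by
              intro hth
              apply hk
              have h1 : k * (t * h) = h * (k * t) := by rw [← mul_assoc]; exact hcom
              rw [hth, ← mul_assoc, ← mul_assoc] at h1
              exact mul_right_cancel h1
            rw [hv t hth x hxt, lie_zero]
          · rw [leibniz_lie, hv k hk c hc, lie_zero, add_zero]
            exact hv (k * t) hcom ⁅c, x⁆ (hmul k t c hc x hxt)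
        · intro x y hx hy k hk c hc
          rw [add_lie, lie_add, hx k hk c hc, hy k hk c hc, add_zero]
      intro k hk c hc
      exact main x trivial k hk c hc }
  have hCh : LieSubmodule.lieSpan F L (𝒜 h : Set L) ≤ C := by
    rw [LieSubmodule.lieSpan_le]
    intro v hv k hk c hc
    exact key0 k h hk c hc v hv
  -- the centralizer of Id(L_h) is a Lie submodule (ideal)
  let D : LieSubmodule F L L :=
  { carrier := {u | ∀ v ∈ LieSubmodule.lieSpan F L (𝒜 h : Set L), ⁅u, v⁆ = 0}
    add_mem' := by
      intro a b ha hb v hv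
      rw [add_lie, ha v hv, hb v hv, add_zero]
    zero_mem' := by intro v hv; simp
    smul_mem' := by
      intro r a ha v hv
      rw [smul_lie, ha v hv, smul_zero]
    lie_mem := by
      intro x u hu v hv
      have h1 : ⁅x, v⁆ ∈ LieSubmodule.lieSpan F L (𝒜 h : Set L) :=
        (LieSubmodule.lieSpan F L (𝒜 h : Set L)).lie_mem hv
      rw [lie_lie, hu v hv, hu ⁅x, v⁆ h1, lie_zero, sub_zero] }
  have hDg : LieSubmodule.lieSpan F L (𝒜 g : Set L) ≤ D := by
    rw [LieSubmodule.lieSpan_le]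
    intro u hu v hv
    exact (hCh hv) g hnc u hu
  intro u hu v hv
  exact (hDg hu) v hv
end

section
/- Let G be a group and let L = ⊕_{g∈G} L_g be a G-graded simple Lie algebra over a field F. Then the subgroup of G generated by Supp L is abelian; equivalently, any two elements of Supp L commute in G. -/
/-- If `L` is a `G`-graded simple Lie algebra, then any two elements of
`Supp L` commute; equivalently the subgroup of `G` generated by `Supp L` is abelian. -/
theorem gradedSimple_support_commutative {G F L : Type*} [Group G] [Field F]
    [LieRing L] [LieAlgebra F L] (𝒜 : G → Submodule F L) (hgr : IsLieGrading 𝒜)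
    (hs : IsGradedSimple 𝒜) :
    (∀ g h : G, 𝒜 g ≠ ⊥ → 𝒜 h ≠ ⊥ → g * h = h * g) ∧
      ∀ x ∈ Subgroup.closure {g : G | 𝒜 g ≠ ⊥},
        ∀ y ∈ Subgroup.closure {g : G | 𝒜 g ≠ ⊥}, x * y = y * x := by
  classical
  obtain ⟨hint, hbr⟩ := hgr
  have hdisj : ∀ a b : G, a ≠ b → ∀ x : L, x ∈ 𝒜 a → x ∈ 𝒜 b → x = 0 := by
    intro a b hab x hxa hxb
    exact (Submodule.disjoint_def.mp (hint.submodule_iSupIndep.pairwiseDisjoint hab)) x hxa hxb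
  have htop : (⨆ k, 𝒜 k) = (⊤ : Submodule F L) := hint.submodule_iSup_eq_top
  have claimA : ∀ a b : G, a * b ≠ b * a → ∀ x ∈ 𝒜 a, ∀ y ∈ 𝒜 b, ⁅x, y⁆ = 0 := by
    intro a b hab x hx y hy
    refine hdisj _ _ hab _ (hbr a b x hx y hy) ?_
    have h2 : -⁅y, x⁆ ∈ 𝒜 (b * a) := neg_mem (hbr b a y hy x hx)
    simpa using h2
  have key : ∀ g h : G, 𝒜 g ≠ ⊥ → 𝒜 h ≠ ⊥ → g * h = h * g := by
    intro g h hg hh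
    by_contra hgh
    set N : Submodule F L := ⨆ k ∈ {k : G | g * k ≠ k * g}, 𝒜 k with hNdef
    have hAle : ∀ k : G, g * k ≠ k * g → 𝒜 k ≤ N := fun k hk =>
      le_iSup₂ (f := fun (k : G) (_ : g * k ≠ k * g) => 𝒜 k) k hk
    set I : LieSubalgebra F L := LieSubalgebra.lieSpan F L (N : Set L) with hIdef
    have hNI : N ≤ I.toSubmodule := fun x hx => LieSubalgebra.subset_lieSpan hx
    -- the centralizer of 𝒜 g, as a Lie subalgebra
    have hC : ∀ x ∈ I, ∀ u ∈ 𝒜 g, ⁅u, x⁆ = 0 := by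
      set Csub : Submodule F L :=
        { carrier := {x | ∀ u ∈ 𝒜 g, ⁅u, x⁆ = 0}
          add_mem' := by intro a b ha hb u hu; rw [lie_add, ha u hu, hb u hu, add_zero]
          zero_mem' := by intro u hu; simp
          smul_mem' := by intro c a ha u hu; rw [lie_smul, ha u hu, smul_zero] } with hCdef
      set C : LieSubalgebra F L :=
        { toSubmodule := Csub
          lie_mem' := by
            intro x y hx hy u hu
            rw [leibniz_lie, hx u hu, hy u hu, lie_zero, zero_lie, add_zero] } with hCdef2
      have hNC : N ≤ C.toSubmodule := by
        refine iSup₂_le fun k hk => ?_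
        intro y hy u hu
        exact claimA g k hk u hu y hy
      have hspan : LieSubalgebra.lieSpan F L (N : Set L) ≤ C :=
        LieSubalgebra.lieSpan_le.mpr (fun x hx => hNC hx)
      exact fun x hx => hspan hx
    -- I is closed under bracketing with homogeneous elements
    have hKey : ∀ y ∈ I, ∀ m : G, ∀ x ∈ 𝒜 m, ⁅x, y⁆ ∈ I.toSubmodule := by
      set Ksub : Submodule F L :=
        { carrier := {y | ∀ m : G, ∀ x ∈ 𝒜 m, ⁅x, y⁆ ∈ I.toSubmodule}
          add_mem' := by
            intro a b ha hb m x hx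
            rw [lie_add]; exact add_mem (ha m x hx) (hb m x hx)
          zero_mem' := by intro m x hx; simp
          smul_mem' := by
            intro c a ha m x hx
            rw [lie_smul]; exact Submodule.smul_mem _ c (ha m x hx) } with hKdef
      set K : LieSubalgebra F L :=
        { toSubmodule := I.toSubmodule ⊓ Ksub
          lie_mem' := by
            rintro y z ⟨hyI, hyK⟩ ⟨hzI, hzK⟩
            refine ⟨I.lie_mem hyI hzI, ?_⟩
            intro m x hx
            rw [leibniz_lie]
            exact add_mem (I.lie_mem (hyK m x hx) hzI) (I.lie_mem hyI (hzK m x hx)) } with hKdef2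
      have hNK : N ≤ (I.toSubmodule ⊓ Ksub) := by
        refine iSup₂_le fun k hk => le_inf ((hAle k hk).trans hNI) ?_
        intro y hy m x hx
        by_cases hmg : g * m = m * g
        · have hmk : g * (m * k) ≠ (m * k) * g := by
            intro heq
            apply hk
            rw [← mul_assoc, hmg, mul_assoc, mul_assoc] at heq
            exact mul_left_cancel heq
          exact hNI (hAle _ hmk (hbr m k x hx y hy))
        · exact I.lie_mem (hNI (hAle m hmg hx)) (hNI (hAle k hk hy))
      have hspan : LieSubalgebra.lieSpan F L (N : Set L) ≤ K :=
        LieSubalgebra.lieSpan_le.mpr (fun x hx => hNK hx)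
      intro y hy m x hx
      exact (hspan hy).2 m x hx
    -- graded ideal generated
    set J : LieIdeal F L :=
      { toSubmodule := ⨆ k : G, (𝒜 k ⊓ I.toSubmodule)
        lie_mem := by
          intro x m hm
          refine Submodule.iSup_induction (motive := fun m => ⁅x, m⁆ ∈ ⨆ k : G, (𝒜 k ⊓ I.toSubmodule))
            _ hm ?_ (by simp) (fun a b ha hb => by simp only [lie_add]; exact add_mem ha hb)
          rintro k m ⟨hmk, hmI⟩
          have hx : x ∈ ⨆ j, 𝒜 j := htop ▸ Submodule.mem_top
          refine Submodule.iSup_induction (motive := fun x => ⁅x, m⁆ ∈ ⨆ k : G, (𝒜 k ⊓ I.toSubmodule))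
            _ hx ?_ (by simp) (fun a b ha hb => by simp only [add_lie]; exact add_mem ha hb)
          intro j x hxj
          exact le_iSup (fun k => 𝒜 k ⊓ I.toSubmodule) (j * k)
            ⟨hbr j k x hxj m hmk, hKey m hmI j x hxj⟩ } with hJdef
    have hJgr : IsGradedSubspace 𝒜 J.toSubmodule := by
      refine le_antisymm (iSup_le fun k => ?_) (iSup_le fun a => inf_le_right)
      exact le_trans (le_inf inf_le_left (le_iSup (fun k => 𝒜 k ⊓ I.toSubmodule) k))
        (le_iSup (fun a => 𝒜 a ⊓ J.toSubmodule) k)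
    have hhJ : 𝒜 h ≤ J.toSubmodule := by
      have h1 : 𝒜 h ≤ I.toSubmodule := (hAle h hgh).trans hNI
      have : 𝒜 h ≤ 𝒜 h ⊓ I.toSubmodule := le_inf le_rfl h1
      exact this.trans (le_iSup (fun k => 𝒜 k ⊓ I.toSubmodule) h)
    have hJtop : J = ⊤ := by
      rcases hs.2 J hJgr with hbot | htop'
      · exfalso
        apply hh
        rw [eq_bot_iff]
        refine hhJ.trans ?_
        rw [hbot]
        intro x hx
        simpa using hx
      · exact htop'
    -- hence 𝒜 g is central
    have hcentral : ∀ u ∈ 𝒜 g, ∀ y : L, ⁅u, y⁆ = 0 := by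
      intro u hu y
      have hyJ : y ∈ J.toSubmodule := by rw [hJtop]; trivial
      have hyI : y ∈ I.toSubmodule := by
        refine Submodule.iSup_induction (motive := fun y => y ∈ I.toSubmodule) _ hyJ
          (fun k x hx => hx.2) (zero_mem _) (fun a b ha hb => add_mem ha hb)
      exact hC y hyI u hu
    -- 𝒜 g is then a graded ideal
    set W : LieIdeal F L :=
      { toSubmodule := 𝒜 g
        lie_mem := by
          intro x m hm
          have : ⁅x, m⁆ = 0 := by
            have := hcentral m hm x
            rw [← lie_skew, this, neg_zero]
          rw [this]; exact (𝒜 g).zero_mem } with hWdef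
    have hWgr : IsGradedSubspace 𝒜 W.toSubmodule := by
      refine le_antisymm ?_ (iSup_le fun a => inf_le_right)
      have : 𝒜 g ≤ 𝒜 g ⊓ 𝒜 g := le_inf le_rfl le_rfl
      exact this.trans (le_iSup (fun a => 𝒜 a ⊓ (𝒜 g : Submodule F L)) g)
    rcases hs.2 W hWgr with hbot | htop'
    · apply hg
      rw [eq_bot_iff]
      intro x hx
      have : x ∈ (⊥ : LieIdeal F L) := hbot ▸ hx
      simpa using this
    · obtain ⟨x, y, hxy⟩ := hs.1
      apply hxy
      have hx : x ∈ 𝒜 g := by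
        have : x ∈ (⊤ : LieIdeal F L) := trivial
        rw [← htop'] at this; exact this
      exact hcentral x hx y
  refine ⟨key, ?_⟩
  -- closure is abelian
  have hsub : {g : G | 𝒜 g ≠ ⊥} ⊆ (Subgroup.centralizer {g : G | 𝒜 g ≠ ⊥} : Set G) := by
    intro a ha
    rw [SetLike.mem_coe, Subgroup.mem_centralizer_iff]
    intro b hb
    exact key b a hb ha
  have h1 : Subgroup.closure {g : G | 𝒜 g ≠ ⊥} ≤ Subgroup.centralizer {g : G | 𝒜 g ≠ ⊥} :=
    (Subgroup.closure_le _).mpr hsub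
  intro x hx y hy
  have h2 : Subgroup.closure {g : G | 𝒜 g ≠ ⊥} ≤
      Subgroup.centralizer (Subgroup.closure {g : G | 𝒜 g ≠ ⊥} : Set G) := by
    refine (Subgroup.closure_le _).mpr ?_
    intro a ha
    rw [SetLike.mem_coe, Subgroup.mem_centralizer_iff]
    intro z hz
    exact ((Subgroup.mem_centralizer_iff.mp (h1 hz)) a ha).symm
  exact Subgroup.mem_centralizer_iff.mp (h2 hy) x hx
end
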